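/- For every nonzero y ∈ G_m, writing k = m − v_p(ȳ) (so k ∈ {1,…,m}), the characteristic function of w satisfies Σ_{x ∈ G_m} w(x)·e(x,y) = (p^{mb}/(p^{mb} − 1))·(1 − β·p^{(k−m)b}); and for y = 0, Σ_{x ∈ G_m} w(x)·e(x,0) = 1. -/

import Mathlib

open scoped BigOperators

/-- β = (p^{b+1} − 1)/(p^b (p − 1)) -/
noncomputable def betaC (p : ℕ) (b : ℝ) : ℝ :=
  ((p : ℝ) ^ (b + 1) - 1) / ((p : ℝ) ^ b * ((p : ℝ) - 1))

/-- c_m = (p^b − 1)·p^{mb}/(p^{mb} − 1) -/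
noncomputable def cC (p : ℕ) (b : ℝ) (m : ℕ) : ℝ :=
  ((p : ℝ) ^ b - 1) * (p : ℝ) ^ ((m : ℝ) * b) / ((p : ℝ) ^ ((m : ℝ) * b) - 1)

/-- The single-step law `w` on `G_m = ZMod (p^m)`. -/
noncomputable def wfun (p : ℕ) (b : ℝ) (m : ℕ) (x : ZMod (p ^ m)) : ℝ :=
  if x = 0 then 0 else
    cC p b m * (p : ℝ) ^ (-((m - padicValNat p x.val : ℕ) : ℝ) * b) /
      (((p : ℝ) - 1) * (p : ℝ) ^ ((m - padicValNat p x.val : ℕ) - 1))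

/-- The standard additive character pairing on `ZMod (p^m)`. -/
noncomputable def epair (p m : ℕ) (x y : ZMod (p ^ m)) : ℂ :=
  Complex.exp (2 * Real.pi * Complex.I * (x.val : ℂ) * (y.val : ℂ) / ((p : ℂ) ^ m))

open Finset

/-- weight of shell ℓ -/
noncomputable def Wl (p : ℕ) (b : ℝ) (m ℓ : ℕ) : ℝ :=
  cC p b m * (p : ℝ) ^ (-(ℓ : ℝ) * b) / (((p : ℝ) - 1) * (p : ℝ) ^ (ℓ - 1))

lemma lemA (N a : ℕ) (hN : 0 < N) :
    ∑ t ∈ range N, Complex.exp (2 * Real.pi * Complex.I * (t : ℂ) * (a : ℂ) / (N : ℂ)) =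
      if N ∣ a then (N : ℂ) else 0 := by
  have hNC : (N : ℂ) ≠ 0 := Nat.cast_ne_zero.mpr hN.ne'
  set ζ : ℂ := Complex.exp (2 * Real.pi * Complex.I * (a : ℂ) / (N : ℂ)) with hζ
  have hpow : ∀ t : ℕ, Complex.exp (2 * Real.pi * Complex.I * (t : ℂ) * (a : ℂ) / (N : ℂ)) = ζ ^ t := by
    intro t
    rw [hζ, ← Complex.exp_nat_mul]
    ring_nf
  rw [Finset.sum_congr rfl (fun t _ => hpow t)]
  by_cases hdvd : N ∣ a
  · obtain ⟨c, rfl⟩ := hdvd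
    have : ζ = 1 := by
      rw [hζ, Complex.exp_eq_one_iff]
      exact ⟨c, by push_cast; field_simp⟩
    simp [this]
  · have hζ1 : ζ ≠ 1 := by
      intro h
      rw [hζ, Complex.exp_eq_one_iff] at h
      obtain ⟨n, hn⟩ := h
      apply hdvd
      have h2 : (2 : ℂ) * Real.pi * Complex.I ≠ 0 := by
        simp [Real.pi_ne_zero, Complex.I_ne_zero]
      have hcc : (a : ℂ) = n * N := by
        field_simp at hn
        apply mul_left_cancel₀ h2
        rw [hn]; ring
      have ha : (a : ℤ) = n * N := by exact_mod_cast hcc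
      exact Int.natCast_dvd_natCast.mp ⟨n, by rw [ha]; ring⟩
    have hζN : ζ ^ N = 1 := by
      rw [hζ, ← Complex.exp_nat_mul]
      rw [Complex.exp_eq_one_iff]
      exact ⟨a, by push_cast; field_simp⟩
    have := geom_sum_mul ζ N
    rw [hζN, sub_self] at this
    rw [if_neg hdvd]
    exact (mul_eq_zero.mp this).resolve_right (sub_ne_zero.mpr hζ1)

lemma lemB (p : ℕ) [Fact p.Prime] (m j : ℕ) (hj : j ≤ m) (y : ZMod (p ^ m)) :
    ∑ x : ZMod (p ^ m), (if p ^ j ∣ x.val then (1 : ℂ) else 0) * epair p m x y =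
      if p ^ (m - j) ∣ y.val then ((p : ℂ) ^ (m - j)) else 0 := by
  have hp : 0 < p := (Fact.out : p.Prime).pos
  have hpj : 0 < p ^ j := pow_pos hp j
  have hpm : 0 < p ^ m := pow_pos hp m
  haveI : NeZero (p ^ m) := ⟨hpm.ne'⟩
  have hsplit : p ^ j * p ^ (m - j) = p ^ m := by
    rw [← pow_add]; congr 1; omega
  have h1 : ∑ x : ZMod (p ^ m), (if p ^ j ∣ x.val then (1 : ℂ) else 0) * epair p m x y =
      ∑ x ∈ univ.filter (fun x : ZMod (p ^ m) => p ^ j ∣ x.val), epair p m x y := by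
    rw [Finset.sum_filter]
    refine Finset.sum_congr rfl fun x _ => ?_
    split <;> simp
  rw [h1]
  have h2 : ∑ x ∈ univ.filter (fun x : ZMod (p ^ m) => p ^ j ∣ x.val), epair p m x y =
      ∑ t ∈ range (p ^ (m - j)),
        Complex.exp (2 * Real.pi * Complex.I * (t : ℂ) * (y.val : ℂ) / ((p ^ (m - j) : ℕ) : ℂ)) := by
    refine Finset.sum_nbij' (fun x => x.val / p ^ j)
      (fun t => ((p ^ j * t : ℕ) : ZMod (p ^ m))) ?_ ?_ ?_ ?_ ?_
    · intro x hx
      simp only [mem_filter, mem_univ, true_and] at hx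
      rw [mem_range]
      exact Nat.div_lt_of_lt_mul (by rw [hsplit]; exact x.val_lt)
    · intro t ht
      rw [mem_range] at ht
      have hlt : p ^ j * t < p ^ m := by
        calc p ^ j * t < p ^ j * p ^ (m - j) := (Nat.mul_lt_mul_left hpj).mpr ht
        _ = p ^ m := hsplit
      simp only [mem_filter, mem_univ, true_and]
      rw [ZMod.val_cast_of_lt hlt]
      exact Dvd.intro t rfl
    · intro x hx
      simp only [mem_filter, mem_univ, true_and] at hx
      beta_reduce
      rw [Nat.mul_div_cancel' hx]
      exact ZMod.natCast_rightInverse x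
    · intro t ht
      rw [mem_range] at ht
      have hlt : p ^ j * t < p ^ m := by
        calc p ^ j * t < p ^ j * p ^ (m - j) := (Nat.mul_lt_mul_left hpj).mpr ht
        _ = p ^ m := hsplit
      beta_reduce
      rw [ZMod.val_cast_of_lt hlt, Nat.mul_div_cancel_left t hpj]
    · intro x hx
      simp only [mem_filter, mem_univ, true_and] at hx
      unfold epair
      congr 1
      beta_reduce
      obtain ⟨c, hc⟩ := hx
      rw [hc, Nat.mul_div_cancel_left c hpj]
      have hj0 : ((p : ℂ) ^ j) ≠ 0 := pow_ne_zero _ (Nat.cast_ne_zero.mpr hp.ne')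
      have hmj0 : ((p : ℂ) ^ (m - j)) ≠ 0 := pow_ne_zero _ (Nat.cast_ne_zero.mpr hp.ne')
      have hsC : (p : ℂ) ^ j * (p : ℂ) ^ (m - j) = (p : ℂ) ^ m := by
        exact_mod_cast congrArg (Nat.cast : ℕ → ℂ) hsplit
      push_cast
      rw [← hsC]
      field_simp
  rw [h2, lemA _ _ (pow_pos hp _)]
  push_cast
  rfl

lemma lemC (p : ℕ) [Fact p.Prime] (b : ℝ) (m : ℕ) (hm : 0 < m) (x : ZMod (p ^ m)) :
    wfun p b m x = ∑ ℓ ∈ Icc 1 m, Wl p b m ℓ *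
      ((if p ^ (m - ℓ) ∣ x.val then (1 : ℝ) else 0) -
       (if p ^ (m - ℓ + 1) ∣ x.val then (1 : ℝ) else 0)) := by
  have hp : 1 < p := (Fact.out : p.Prime).one_lt
  haveI : NeZero (p ^ m) := ⟨(pow_pos (by omega) m).ne'⟩
  by_cases hx : x = 0
  · subst hx
    simp [wfun, ZMod.val_zero]
  · have hv0 : x.val ≠ 0 := fun h => hx ((ZMod.val_eq_zero x).mp h)
    set v := padicValNat p x.val with hv
    have hvlt : v < m := by
      have h1 : p ^ v ≤ x.val := Nat.le_of_dvd (Nat.pos_of_ne_zero hv0) pow_padicValNat_dvd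
      have h2 : x.val < p ^ m := x.val_lt
      exact (pow_lt_pow_iff_right₀ hp).mp (lt_of_le_of_lt h1 h2)
    have hterm : ∀ ℓ ∈ Icc 1 m, Wl p b m ℓ *
        ((if p ^ (m - ℓ) ∣ x.val then (1 : ℝ) else 0) -
         (if p ^ (m - ℓ + 1) ∣ x.val then (1 : ℝ) else 0)) =
        if ℓ = m - v then Wl p b m ℓ else 0 := by
      intro ℓ hℓ
      rw [mem_Icc] at hℓ
      simp only [padicValNat_dvd_iff_le hv0, ← hv]
      by_cases hc : ℓ = m - v
      · subst hc
        rw [if_pos (by omega), if_neg (by omega), if_pos rfl]; ring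
      · rw [if_neg hc]
        by_cases hlt : ℓ < m - v
        · rw [if_neg (by omega), if_neg (by omega)]; ring
        · rw [if_pos (by omega), if_pos (by omega)]; ring
    rw [Finset.sum_congr rfl hterm, Finset.sum_ite_eq' (Icc 1 m) (m - v) (Wl p b m),
      if_pos (by rw [mem_Icc]; omega)]
    unfold wfun Wl
    rw [if_neg hx]

lemma lemD (p : ℕ) [Fact p.Prime] (b : ℝ) (m : ℕ) (hm : 0 < m) (y : ZMod (p ^ m)) :
    ∑ x : ZMod (p ^ m), (wfun p b m x : ℂ) * epair p m x y =
      ∑ ℓ ∈ Icc 1 m, (Wl p b m ℓ : ℂ) *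
        ((if p ^ ℓ ∣ y.val then ((p : ℂ) ^ ℓ) else 0) -
         (if p ^ (ℓ - 1) ∣ y.val then ((p : ℂ) ^ (ℓ - 1)) else 0)) := by
  have hpt : ∀ x : ZMod (p ^ m), (wfun p b m x : ℂ) * epair p m x y =
      ∑ ℓ ∈ Icc 1 m, (Wl p b m ℓ : ℂ) *
        (((if p ^ (m - ℓ) ∣ x.val then (1 : ℂ) else 0) * epair p m x y) -
         ((if p ^ (m - ℓ + 1) ∣ x.val then (1 : ℂ) else 0) * epair p m x y)) := by
    intro x
    have := lemC p b m hm x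
    have hcast : (wfun p b m x : ℂ) = ∑ ℓ ∈ Icc 1 m, (Wl p b m ℓ : ℂ) *
        ((if p ^ (m - ℓ) ∣ x.val then (1 : ℂ) else 0) -
         (if p ^ (m - ℓ + 1) ∣ x.val then (1 : ℂ) else 0)) := by
      rw [this]
      push_cast
      refine Finset.sum_congr rfl fun ℓ _ => ?_
      split_ifs <;> push_cast <;> ring
    rw [hcast, Finset.sum_mul]
    refine Finset.sum_congr rfl fun ℓ _ => ?_
    ring
  rw [Finset.sum_congr rfl (fun x _ => hpt x), Finset.sum_comm]
  refine Finset.sum_congr rfl fun ℓ hℓ => ?_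
  rw [mem_Icc] at hℓ
  have e1 : m - (m - ℓ) = ℓ := by omega
  have e2 : m - (m - ℓ + 1) = ℓ - 1 := by omega
  have hB1 := lemB p m (m - ℓ) (by omega) y
  have hB2 := lemB p m (m - ℓ + 1) (by omega) y
  rw [e1] at hB1
  rw [e2] at hB2
  calc ∑ x : ZMod (p ^ m), (Wl p b m ℓ : ℂ) *
        (((if p ^ (m - ℓ) ∣ x.val then (1 : ℂ) else 0) * epair p m x y) -
         ((if p ^ (m - ℓ + 1) ∣ x.val then (1 : ℂ) else 0) * epair p m x y))
      = (Wl p b m ℓ : ℂ) *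
        ((∑ x : ZMod (p ^ m), (if p ^ (m - ℓ) ∣ x.val then (1 : ℂ) else 0) * epair p m x y) -
         (∑ x : ZMod (p ^ m), (if p ^ (m - ℓ + 1) ∣ x.val then (1 : ℂ) else 0) * epair p m x y)) := by
        rw [← Finset.sum_sub_distrib, Finset.mul_sum]
    _ = _ := by rw [hB1, hB2]

lemma hr_pow (p : ℕ) (b : ℝ) (ℓ : ℕ) :
    (p : ℝ) ^ (-(ℓ : ℝ) * b) = (((p : ℝ) ^ b) ^ ℓ)⁻¹ := by
  have hP : (0:ℝ) ≤ (p : ℝ) := by positivity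
  rw [show -(ℓ : ℝ) * b = b * (ℓ : ℝ) * (-1) by ring, Real.rpow_mul hP,
    Real.rpow_mul (by positivity), Real.rpow_natCast, Real.rpow_neg_one]

lemma hQ_pow (p : ℕ) (b : ℝ) (m : ℕ) :
    (p : ℝ) ^ ((m : ℝ) * b) = ((p : ℝ) ^ b) ^ m := by
  rw [mul_comm, Real.rpow_mul (by positivity : (0:ℝ) ≤ (p:ℝ)), Real.rpow_natCast]

lemma one_lt_q (p : ℕ) [Fact p.Prime] (b : ℝ) (hb : 0 < b) : 1 < (p : ℝ) ^ b := by
  have hP : (1:ℝ) < (p : ℝ) := by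
    exact_mod_cast (Fact.out : p.Prime).one_lt
  exact (Real.one_lt_rpow_iff_of_pos (by positivity)).mpr (Or.inl ⟨hP, hb⟩)

lemma geom_key (q : ℝ) (hq : 1 < q) (v : ℕ) :
    ((q⁻¹) ^ (v + 1) - (q⁻¹) ^ 1) / (q⁻¹ - 1) = (q ^ v - 1) / (q ^ v * (q - 1)) := by
  have hq0 : q ≠ 0 := by linarith
  have hq1 : q - 1 ≠ 0 := by linarith
  have hqv : q ^ v ≠ 0 := pow_ne_zero _ hq0
  have hrne : q⁻¹ - 1 ≠ 0 := by
    have : q⁻¹ < 1 := inv_lt_one_of_one_lt₀ hq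
    linarith
  rw [inv_pow, inv_pow, pow_one, div_eq_div_iff hrne (by positivity)]
  field_simp
  ring

lemma lemR0 (p : ℕ) [Fact p.Prime] (b : ℝ) (hb : 0 < b) (m : ℕ) (hm : 0 < m) :
    ∑ ℓ ∈ Icc 1 m, Wl p b m ℓ * ((p : ℝ) ^ ℓ - (p : ℝ) ^ (ℓ - 1)) = 1 := by
  have hP : (1:ℝ) < (p : ℝ) := by exact_mod_cast (Fact.out : p.Prime).one_lt
  set q : ℝ := (p : ℝ) ^ b with hqdef
  have hq : 1 < q := one_lt_q p b hb
  have hq0 : q ≠ 0 := by linarith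
  have hq1 : q - 1 ≠ 0 := by linarith
  have hqm : 1 < q ^ m := one_lt_pow₀ hq hm.ne'
  have hqm1 : q ^ m - 1 ≠ 0 := by linarith
  have hqmne : q ^ m ≠ 0 := pow_ne_zero _ hq0
  have hrne1 : q⁻¹ ≠ 1 := by
    have : q⁻¹ < 1 := inv_lt_one_of_one_lt₀ hq
    linarith
  have hP1 : (p : ℝ) - 1 ≠ 0 := by linarith
  have hsummand : ∀ ℓ ∈ Icc 1 m, Wl p b m ℓ * ((p : ℝ) ^ ℓ - (p : ℝ) ^ (ℓ - 1)) =
      cC p b m * (q⁻¹) ^ ℓ := by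
    intro ℓ hℓ
    rw [mem_Icc] at hℓ
    have hℓ1 : ℓ - 1 + 1 = ℓ := by omega
    unfold Wl
    rw [hr_pow, ← hqdef, ← hℓ1, pow_succ, pow_succ, inv_pow]
    have hPl : (p : ℝ) ^ (ℓ - 1) ≠ 0 := by positivity
    have hql : q ^ (ℓ - 1) ≠ 0 := by positivity
    field_simp
    simp only [Nat.add_sub_cancel]
    ring
  rw [Finset.sum_congr rfl hsummand, ← Finset.mul_sum, ← Finset.Ico_add_one_right_eq_Icc,
    geom_sum_Ico hrne1 (by omega)]
  have hg := geom_key q hq m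
  rw [hg]
  unfold cC
  rw [hQ_pow, ← hqdef]
  field_simp

lemma lemR (p : ℕ) [Fact p.Prime] (b : ℝ) (hb : 0 < b) (m : ℕ) (hm : 0 < m)
    (n : ℕ) (hn : n ≠ 0) (hnlt : n < p ^ m) :
    ∑ ℓ ∈ Icc 1 m, Wl p b m ℓ *
      ((if p ^ ℓ ∣ n then (p : ℝ) ^ ℓ else 0) -
       (if p ^ (ℓ - 1) ∣ n then (p : ℝ) ^ (ℓ - 1) else 0)) =
    ((p : ℝ) ^ ((m : ℝ) * b) / ((p : ℝ) ^ ((m : ℝ) * b) - 1)) *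
      (1 - betaC p b * (p : ℝ) ^ ((((m - padicValNat p n : ℕ) : ℝ) - (m : ℝ)) * b)) := by
  have hP : (1:ℝ) < (p : ℝ) := by exact_mod_cast (Fact.out : p.Prime).one_lt
  have hP0 : (0:ℝ) < (p : ℝ) := by linarith
  set q : ℝ := (p : ℝ) ^ b with hqdef
  have hq : 1 < q := one_lt_q p b hb
  have hq0 : q ≠ 0 := by linarith
  have hq1 : q - 1 ≠ 0 := by linarith
  have hqm : 1 < q ^ m := one_lt_pow₀ hq hm.ne'
  have hqm1 : q ^ m - 1 ≠ 0 := by linarith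
  have hqmne : q ^ m ≠ 0 := pow_ne_zero _ hq0
  have hrne1 : q⁻¹ ≠ 1 := by
    have : q⁻¹ < 1 := inv_lt_one_of_one_lt₀ hq
    linarith
  have hP1 : (p : ℝ) - 1 ≠ 0 := by linarith
  set v := padicValNat p n with hvdef
  have hqv : q ^ v ≠ 0 := pow_ne_zero _ hq0
  have hvlt : v < m := by
    have h1 : p ^ v ≤ n := Nat.le_of_dvd (Nat.pos_of_ne_zero hn) pow_padicValNat_dvd
    exact (pow_lt_pow_iff_right₀ (by exact_mod_cast hP)).mp (lt_of_le_of_lt h1 hnlt)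
  have hsummand : ∀ ℓ ∈ Icc 1 m, Wl p b m ℓ *
      ((if p ^ ℓ ∣ n then (p : ℝ) ^ ℓ else 0) -
       (if p ^ (ℓ - 1) ∣ n then (p : ℝ) ^ (ℓ - 1) else 0)) =
      (if ℓ ≤ v then cC p b m * (q⁻¹) ^ ℓ else 0) +
      (if ℓ = v + 1 then -(cC p b m * (q⁻¹) ^ (v + 1) / ((p : ℝ) - 1)) else 0) := by
    intro ℓ hℓ
    rw [mem_Icc] at hℓ
    have hℓ1 : ℓ - 1 + 1 = ℓ := by omega
    simp only [padicValNat_dvd_iff_le hn, ← hvdef]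
    by_cases h1 : ℓ ≤ v
    · rw [if_pos h1, if_pos (by omega), if_pos h1, if_neg (by omega), add_zero]
      unfold Wl
      rw [hr_pow, ← hqdef, ← hℓ1, pow_succ, pow_succ, inv_pow]
      have hPl : (p : ℝ) ^ (ℓ - 1) ≠ 0 := by positivity
      have hql : q ^ (ℓ - 1) ≠ 0 := by positivity
      field_simp
      simp only [Nat.add_sub_cancel]
      ring
    · by_cases h2 : ℓ = v + 1
      · subst h2
        rw [if_neg h1, if_pos (by omega), if_neg h1, if_pos rfl, zero_add]
        unfold Wl
        have he : v + 1 - 1 = v := by omega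
        rw [hr_pow, ← hqdef, he, inv_pow]
        have hPl : (p : ℝ) ^ v ≠ 0 := by positivity
        have hql : q ^ (v + 1) ≠ 0 := by positivity
        field_simp
        ring
      · rw [if_neg h1, if_neg (by omega), if_neg h1, if_neg h2]
        ring
  rw [Finset.sum_congr rfl hsummand, Finset.sum_add_distrib, ← Finset.sum_filter]
  have hfil : (Icc 1 m).filter (fun ℓ => ℓ ≤ v) = Icc 1 v := by
    ext ℓ
    simp only [Finset.mem_filter, mem_Icc]
    omega
  rw [hfil, ← Finset.mul_sum, ← Finset.Ico_add_one_right_eq_Icc, geom_sum_Ico hrne1 (by omega),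
    Finset.sum_ite_eq' (Icc 1 m) (v + 1), if_pos (by rw [mem_Icc]; omega)]
  rw [geom_key q hq v]
  have hc1 : (((m - v : ℕ) : ℝ) - (m : ℝ)) * b = -(v : ℝ) * b := by
    have : ((m - v : ℕ) : ℝ) = (m : ℝ) - (v : ℝ) := by
      rw [Nat.cast_sub hvlt.le]
    rw [this]; ring
  rw [hc1, hr_pow, ← hqdef]
  unfold betaC cC
  rw [Real.rpow_add hP0 b 1, Real.rpow_one, hQ_pow, ← hqdef]
  simp only [inv_pow]
  field_simp
  ring

/-- The characteristic function of `w`: for nonzero `y` with `k = m − v_p(ȳ)`,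
`Σ_x w(x)·e(x,y) = (p^{mb}/(p^{mb} − 1))·(1 − β·p^{(k−m)b})`; and for `y = 0` it is `1`. -/
theorem stmt3 (p : ℕ) [Fact p.Prime] (b : ℝ) (hb : 0 < b) (m : ℕ) (hm : 0 < m) :
    (∀ y : ZMod (p ^ m), y ≠ 0 →
      ∑ x : ZMod (p ^ m), (wfun p b m x : ℂ) * epair p m x y =
        ((((p : ℝ) ^ ((m : ℝ) * b) / ((p : ℝ) ^ ((m : ℝ) * b) - 1)) *
          (1 - betaC p b *
            (p : ℝ) ^ ((((m - padicValNat p y.val : ℕ) : ℝ) - (m : ℝ)) * b)) : ℝ) : ℂ)) ∧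
    (∑ x : ZMod (p ^ m), (wfun p b m x : ℂ) * epair p m x 0 = 1) := by
  have hp : 0 < p := (Fact.out : p.Prime).pos
  haveI : NeZero (p ^ m) := ⟨(pow_pos hp m).ne'⟩
  constructor
  · intro y hy
    rw [lemD p b m hm y]
    have hcast : ∑ ℓ ∈ Icc 1 m, (Wl p b m ℓ : ℂ) *
        ((if p ^ ℓ ∣ y.val then ((p : ℂ) ^ ℓ) else 0) -
         (if p ^ (ℓ - 1) ∣ y.val then ((p : ℂ) ^ (ℓ - 1)) else 0)) =
        ((∑ ℓ ∈ Icc 1 m, Wl p b m ℓ *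
          ((if p ^ ℓ ∣ y.val then ((p : ℝ) ^ ℓ) else 0) -
           (if p ^ (ℓ - 1) ∣ y.val then ((p : ℝ) ^ (ℓ - 1)) else 0)) : ℝ) : ℂ) := by
      push_cast
      refine Finset.sum_congr rfl fun ℓ _ => ?_
      split_ifs <;> push_cast <;> ring
    rw [hcast]
    congr 1
    exact lemR p b hb m hm y.val (fun h => hy ((ZMod.val_eq_zero y).mp h)) y.val_lt
  · rw [lemD p b m hm 0]
    have hz : (0 : ZMod (p ^ m)).val = 0 := ZMod.val_zero
    have hcast : ∑ ℓ ∈ Icc 1 m, (Wl p b m ℓ : ℂ) *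
        ((if p ^ ℓ ∣ (0 : ZMod (p ^ m)).val then ((p : ℂ) ^ ℓ) else 0) -
         (if p ^ (ℓ - 1) ∣ (0 : ZMod (p ^ m)).val then ((p : ℂ) ^ (ℓ - 1)) else 0)) =
        ((∑ ℓ ∈ Icc 1 m, Wl p b m ℓ * ((p : ℝ) ^ ℓ - (p : ℝ) ^ (ℓ - 1)) : ℝ) : ℂ) := by
      rw [Complex.ofReal_sum]
      refine Finset.sum_congr rfl fun ℓ _ => ?_
      rw [hz, if_pos (dvd_zero _), if_pos (dvd_zero _)]
      push_cast
      ring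
    rw [hcast, lemR0 p b hb m hm]
    norm_num
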